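/- For x > 1, define Ŵ(x) = x + log x, and let W̄(x) = −W_{−1}(−e^{−x}) where W_{−1} is the negative branch of the Lambert W function (equivalently W̄(x) is the unique solution y ≥ 1 of y − log y = x for x ≥ 1). Then for x > 1, Ŵ(x) ≤ W̄(x) ≤ Ŵ(x) + min{1/2, 1/√x}. -/

import Mathlib

/-- Strict monotonicity of `t ↦ t - log t` on `[1, ∞)`. -/
lemma flog_strictMono {a b : ℝ} (ha : 1 ≤ a) (hab : a < b) :
    a - Real.log a < b - Real.log b := by
  have ha0 : 0 < a := lt_of_lt_of_le one_pos ha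
  have hb0 : 0 < b := lt_trans ha0 hab
  have h1 : b / a ≠ 1 := by
    intro h
    have : b = a := by field_simp at h; linarith
    linarith
  have h2 : Real.log (b / a) < b / a - 1 :=
    Real.log_lt_sub_one_of_pos (by positivity) h1
  have h3 : Real.log (b / a) = Real.log b - Real.log a :=
    Real.log_div (by positivity) (by positivity)
  have h4 : b / a - 1 ≤ b - a := by
    rw [div_sub_one (by positivity), div_le_iff₀ ha0]
    nlinarith
  linarith

/-- Key inequality, case `c = 1/2`. -/
lemma key_half {x : ℝ} (hx : 0 < x) :
    Real.log x + 1/2 ≤ x * (Real.exp (1/2 : ℝ) - 1) := by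
  set E := Real.exp (1/2 : ℝ) with hE
  have hE0 : 0 < E := Real.exp_pos _
  have hE2 : E ^ 2 = Real.exp 1 := by
    rw [hE, sq, ← Real.exp_add]; norm_num
  have hexp1 : (2.7182818283 : ℝ) < Real.exp 1 := Real.exp_one_gt_d9
  -- tangent bound: log x ≤ x/E − 1/2
  have htan : Real.log x + 1/2 ≤ x / E := by
    have h := Real.log_le_sub_one_of_pos (x := x / E) (by positivity)
    rw [Real.log_div (by positivity) (by positivity), hE, Real.log_exp] at h
    linarith
  have hEE : x / E ≤ x * (E - 1) := by
    rw [div_le_iff₀ hE0]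
    have h1 : E ^ 2 - E ≥ 1 := by nlinarith [sq_nonneg (E - 1.65)]
    nlinarith
  linarith

/-- Key inequality, case `c = 1/√x`, written with `s = √x ≥ 2`. -/
lemma key_sqrt {s : ℝ} (hs : 2 ≤ s) :
    Real.log (s ^ 2) + 1/s ≤ s ^ 2 * (Real.exp (1/s) - 1) := by
  have hs0 : (0:ℝ) < s := by linarith
  have hexp1 : (2.7182818283 : ℝ) < Real.exp 1 := Real.exp_one_gt_d9
  have he0 : (0:ℝ) < Real.exp 1 := Real.exp_pos 1
  -- exp(1/s) ≥ (1 + 1/(2s))²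
  have hexpc : (1 + 1/(2*s))^2 ≤ Real.exp (1/s) := by
    have h1 : 1 + 1/(2*s) ≤ Real.exp (1/(2*s)) := by
      have := Real.add_one_le_exp (1/(2*s)); linarith
    have h2 : (Real.exp (1/(2*s)))^2 = Real.exp (1/s) := by
      rw [sq, ← Real.exp_add]
      congr 1
      field_simp
      norm_num
    calc (1 + 1/(2*s))^2 ≤ (Real.exp (1/(2*s)))^2 :=
          pow_le_pow_left₀ (by positivity) h1 2
      _ = Real.exp (1/s) := h2
  -- log s ≤ s / e
  have hls : Real.exp 1 * Real.log s ≤ s := by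
    have h := Real.log_le_sub_one_of_pos (x := s / Real.exp 1) (by positivity)
    rw [Real.log_div (by positivity) (by positivity), Real.log_exp] at h
    have hls' : Real.log s ≤ s / Real.exp 1 := by linarith
    calc Real.exp 1 * Real.log s ≤ Real.exp 1 * (s / Real.exp 1) :=
          mul_le_mul_of_nonneg_left hls' he0.le
      _ = s := by field_simp
  have hlx : Real.log (s ^ 2) = 2 * Real.log s := by
    rw [Real.log_pow]; push_cast; ring
  -- s² * (exp(1/s) - 1) ≥ s + 1/4
  have hstep : s + 1/4 ≤ s ^ 2 * (Real.exp (1/s) - 1) := by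
    have heq : s ^ 2 * ((1 + 1/(2*s))^2 - 1) = s + 1/4 := by
      field_simp
      ring
    nlinarith [hexpc, sq_nonneg s]
  -- 2 log s + 1/s ≤ s + 1/4
  have hinv : 1/s ≤ 1/2 := by
    rw [div_le_div_iff₀ hs0 (by norm_num)]; linarith
  have hprod : 2 * (Real.exp 1 - 2) ≤ s * (Real.exp 1 - 2) :=
    mul_le_mul_of_nonneg_right hs (by linarith)
  have hfin : 2 * Real.log s + 1/s ≤ s + 1/4 := by
    have h2ls : 2 * (Real.exp 1 * Real.log s) ≤ 2 * s := by linarith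
    -- 2 e log s ≤ 2 s ; want 2 log s ≤ s - 1/4 + (1/2 - 1/s) ...
    -- From e log s ≤ s : 2 log s ≤ 2 s / e. Then s e + e/4 ≥ 2 s + e/2.
    have hcmp : 2 * s + Real.exp 1 / 2 ≤ s * Real.exp 1 + Real.exp 1 / 4 := by
      nlinarith [hprod, hexp1]
    -- 2 log s * e ≤ 2 s ≤ (s + 1/4 - 1/2) e ≤ (s + 1/4 - 1/s) e
    have hlog2 : 2 * Real.log s * Real.exp 1 ≤ (s + 1/4 - 1/2) * Real.exp 1 := by
      nlinarith [hls, hcmp]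
    have := (mul_le_mul_iff_of_pos_right he0).1 hlog2
    linarith
  rw [hlx]
  linarith

/-- With `Ŵ(x) = x + log x` and `W̄` the inverse of `y ↦ y − log y` on `[1,∞)`,
for `x > 1` one has `Ŵ(x) ≤ W̄(x) ≤ Ŵ(x) + min{1/2, 1/√x}`. -/
theorem lambert_bounds (Wbar : ℝ → ℝ)
    (hW1 : ∀ x : ℝ, 1 ≤ x → 1 ≤ Wbar x)
    (hW2 : ∀ x : ℝ, 1 ≤ x → Wbar x - Real.log (Wbar x) = x)
    (x : ℝ) (hx : 1 < x) :
    x + Real.log x ≤ Wbar x ∧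
    Wbar x ≤ x + Real.log x + min (1 / 2) (1 / Real.sqrt x) := by
  have hx0 : (0:ℝ) < x := by linarith
  have hy1 : 1 ≤ Wbar x := hW1 x hx.le
  have hyx : Wbar x - Real.log (Wbar x) = x := hW2 x hx.le
  have hly : 0 ≤ Real.log (Wbar x) := Real.log_nonneg hy1
  have hxy : x ≤ Wbar x := by linarith
  refine ⟨?_, ?_⟩
  · have : Real.log x ≤ Real.log (Wbar x) := Real.log_le_log hx0 hxy
    linarith
  · set c := min (1/2 : ℝ) (1 / Real.sqrt x) with hc
    have hsx : 0 < Real.sqrt x := Real.sqrt_pos.2 hx0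
    have hc0 : 0 < c := lt_min (by norm_num) (by positivity)
    have key : Real.log x + c ≤ x * (Real.exp c - 1) := by
      rcases le_total x 4 with h4 | h4
      · have hs2 : Real.sqrt x ≤ 2 := by
          have h1 : Real.sqrt x ≤ Real.sqrt 4 := Real.sqrt_le_sqrt h4
          have h44 : Real.sqrt 4 = 2 := by
            rw [show (4:ℝ) = 2^2 by norm_num, Real.sqrt_sq (by norm_num)]
          linarith
        have hceq : c = 1/2 := min_eq_left (by
          rw [div_le_div_iff₀ (by norm_num) hsx]; linarith)
        rw [hceq]
        exact key_half hx0
      · have hs2 : (2:ℝ) ≤ Real.sqrt x := by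
          have h1 : Real.sqrt 4 ≤ Real.sqrt x := Real.sqrt_le_sqrt h4
          have h44 : Real.sqrt 4 = 2 := by
            rw [show (4:ℝ) = 2^2 by norm_num, Real.sqrt_sq (by norm_num)]
          linarith
        have hceq : c = 1 / Real.sqrt x := min_eq_right (by
          rw [div_le_div_iff₀ hsx (by norm_num)]; linarith)
        have hss : Real.sqrt x ^ 2 = x := Real.sq_sqrt hx0.le
        have hk := key_sqrt hs2
        rw [hss] at hk
        rw [hceq]
        exact hk
    have hec1 : (1:ℝ) ≤ Real.exp c := by
      have := Real.add_one_le_exp c; linarith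
    have ha1 : 1 ≤ x * Real.exp c := one_le_mul_of_one_le_of_one_le hx.le hec1
    have hbound : Wbar x ≤ x * Real.exp c := by
      by_contra h
      push_neg at h
      have hmono := flog_strictMono ha1 h
      have hfa : x ≤ x * Real.exp c - Real.log (x * Real.exp c) := by
        rw [Real.log_mul (by positivity) (Real.exp_ne_zero c), Real.log_exp]
        have hring : x * (Real.exp c - 1) = x * Real.exp c - x := by ring
        linarith
      linarith
    have hlog : Real.log (Wbar x) ≤ Real.log x + c := by
      have h1 : Real.log (Wbar x) ≤ Real.log (x * Real.exp c) :=
        Real.log_le_log (by linarith) hbound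
      rwa [Real.log_mul (by positivity) (Real.exp_ne_zero c), Real.log_exp] at h1
    linarith
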